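/- arXiv:2208.03622 — 4 statements merged into one kernel-verified Lean document; each statement's English description precedes it below -/
import Mathlib

section
/- Let {w₁,…,wₙ} be a basis of ℝⁿ, x ∈ ℝⁿ, and X an n×n real symmetric matrix. Then X = xxᵀ if and only if for all i, j ∈ {1,…,n}: (wᵢ+wⱼ)ᵀ X (wᵢ+wⱼ) = ((wᵢ+wⱼ)ᵀx)² and (wᵢ−wⱼ)ᵀ X (wᵢ−wⱼ) = ((wᵢ−wⱼ)ᵀx)². -/
open Matrix

lemma aux_dot_zero {n : ℕ} (w : Module.Basis (Fin n) ℝ (Fin n → ℝ)) (v : Fin n → ℝ)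
    (h : ∀ i, w i ⬝ᵥ v = 0) : v = 0 := by
  have hall : ∀ u : Fin n → ℝ, u ⬝ᵥ v = 0 := by
    intro u
    have hu : u ∈ Submodule.span ℝ (Set.range w) := by
      rw [w.span_eq]; trivial
    induction hu using Submodule.span_induction with
    | mem y hy => obtain ⟨i, rfl⟩ := hy; exact h i
    | zero => simp
    | add a b _ _ ha hb => simp [add_dotProduct, ha, hb]
    | smul c a _ ha => simp [smul_dotProduct, ha]
  exact dotProduct_self_eq_zero.mp (hall v)

lemma aux_mat_zero {n : ℕ} (w : Module.Basis (Fin n) ℝ (Fin n → ℝ)) (M : Matrix (Fin n) (Fin n) ℝ)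
    (h : ∀ i j, w i ⬝ᵥ M.mulVec (w j) = 0) : M = 0 := by
  have hcol : ∀ j, M.mulVec (w j) = 0 := fun j => aux_dot_zero w _ (fun i => h i j)
  have hv : ∀ v : Fin n → ℝ, M.mulVec v = 0 := by
    intro v
    have hu : v ∈ Submodule.span ℝ (Set.range w) := by
      rw [w.span_eq]; trivial
    induction hu using Submodule.span_induction with
    | mem y hy => obtain ⟨i, rfl⟩ := hy; exact hcol i
    | zero => simp
    | add a b _ _ ha hb => simp [Matrix.mulVec_add, ha, hb]
    | smul c a _ ha => simp [Matrix.mulVec_smul, ha]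
  ext i j
  have := congrFun (hv (Pi.single j 1)) i
  simpa [Matrix.mulVec_single] using this

/-- For a basis `{w₁,…,wₙ}` of `ℝⁿ`, `x ∈ ℝⁿ` and a symmetric matrix `X`,
`X = x xᵀ` iff `(wᵢ±wⱼ)ᵀ X (wᵢ±wⱼ) = ((wᵢ±wⱼ)ᵀ x)²` for all `i, j`. -/
theorem stmt1 (n : ℕ) (w : Module.Basis (Fin n) ℝ (Fin n → ℝ)) (x : Fin n → ℝ)
    (X : Matrix (Fin n) (Fin n) ℝ) (hX : X.IsSymm) :
    X = Matrix.vecMulVec x x ↔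
      ∀ i j : Fin n,
        dotProduct (w i + w j) (X.mulVec (w i + w j))
          = (dotProduct (w i + w j) x) ^ 2 ∧
        dotProduct (w i - w j) (X.mulVec (w i - w j))
          = (dotProduct (w i - w j) x) ^ 2 := by
  have hmv : ∀ u v : Fin n → ℝ, u ⬝ᵥ (Matrix.vecMulVec x x).mulVec v
      = (u ⬝ᵥ x) * (v ⬝ᵥ x) := by
    intro u v
    simp [Matrix.vecMulVec_eq (Fin 1), Matrix.mulVec, dotProduct, Matrix.mul_apply,
      Finset.mul_sum, Finset.sum_mul]
    rw [Finset.sum_comm]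
    congr 1; ext k; congr 1; ext l; ring
  constructor
  · rintro rfl i j
    constructor <;> rw [hmv] <;> ring
  · intro h
    have hsymm : ∀ u v : Fin n → ℝ, u ⬝ᵥ X.mulVec v = v ⬝ᵥ X.mulVec u := by
      intro u v
      rw [Matrix.dotProduct_mulVec, ← Matrix.mulVec_transpose, hX.eq, dotProduct_comm]
    have key : ∀ i j, w i ⬝ᵥ X.mulVec (w j) = (w i ⬝ᵥ x) * (w j ⬝ᵥ x) := by
      intro i j
      obtain ⟨hp, hm⟩ := h i j
      have hs := hsymm (w i) (w j)
      simp only [Matrix.mulVec_add, Matrix.mulVec_sub, dotProduct_add,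
        dotProduct_sub, add_dotProduct, sub_dotProduct] at hp hm
      nlinarith [hp, hm, hs]
    have hzero : X - Matrix.vecMulVec x x = 0 := by
      apply aux_mat_zero w
      intro i j
      rw [Matrix.sub_mulVec, dotProduct_sub, hmv, key]
      ring
    exact sub_eq_zero.mp hzero
end

section
/- Consider F = {(x₁,x₂) ∈ ℝ² : x₂ + (x₁ − x₂)² = 0}. The projection onto ℝ² of its parabolic relaxation with the standard basis, namely the set of (x₁,x₂) for which there exist X₁₁, X₂₂, X₁₂ with x₂ + X₁₁ + X₂₂ − 2X₁₂ = 0, X₁₁ + X₂₂ + 2X₁₂ ≥ (x₁+x₂)², X₁₁ + X₂₂ − 2X₁₂ ≥ (x₁−x₂)², X₁₁ ≥ x₁², X₂₂ ≥ x₂², equals {(x₁,x₂) : x₂ + (x₁ − x₂)² ≤ 0}. -/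
/-- The projection onto `ℝ²` of the parabolic relaxation (standard basis)
of `F = {(x₁,x₂) : x₂ + (x₁ − x₂)² = 0}` equals `{(x₁,x₂) : x₂ + (x₁ − x₂)² ≤ 0}`. -/
theorem stmt8 :
    {p : ℝ × ℝ | ∃ X11 X22 X12 : ℝ,
        p.2 + X11 + X22 - 2 * X12 = 0 ∧
        X11 + X22 + 2 * X12 ≥ (p.1 + p.2) ^ 2 ∧
        X11 + X22 - 2 * X12 ≥ (p.1 - p.2) ^ 2 ∧
        X11 ≥ p.1 ^ 2 ∧ X22 ≥ p.2 ^ 2}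
      = {p : ℝ × ℝ | p.2 + (p.1 - p.2) ^ 2 ≤ 0} := by
  ext ⟨x, y⟩
  simp only [Set.mem_setOf_eq]
  constructor
  · rintro ⟨X11, X22, X12, h0, h1, h2, h3, h4⟩
    nlinarith
  · intro h
    set t : ℝ := max 0 ((x + y) ^ 2 - y) with ht
    refine ⟨x ^ 2 + t, y ^ 2 + t, (y + x ^ 2 + t + y ^ 2 + t) / 2, by ring, ?_, ?_, ?_, ?_⟩
    · have h1 : t ≥ (x + y) ^ 2 - y := le_max_right _ _
      have h2 : t ≥ 0 := le_max_left _ _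
      nlinarith
    · nlinarith
    · nlinarith [le_max_left (0:ℝ) ((x + y) ^ 2 - y)]
    · nlinarith [le_max_left (0:ℝ) ((x + y) ^ 2 - y)]
end

section
/- Consider F = {(x₁,x₂) ∈ ℝ² : x₂ + (x₁ − x₂)² = 0}. The projection onto ℝ² of its SOCP relaxation, namely the set of (x₁,x₂) for which there exist X₁₁, X₂₂, X₁₂ with x₂ + X₁₁ + X₂₂ − 2X₁₂ = 0, X₁₁X₂₂ ≥ X₁₂², X₁₁ ≥ x₁², X₂₂ ≥ x₂², equals the half-plane {(x₁,x₂) : x₂ ≤ 0}. -/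
/-- The projection onto `ℝ²` of the SOCP relaxation of
`F = {(x₁,x₂) : x₂ + (x₁ − x₂)² = 0}` equals the half-plane `{(x₁,x₂) : x₂ ≤ 0}`. -/
theorem stmt9 :
    {p : ℝ × ℝ | ∃ X11 X22 X12 : ℝ,
        p.2 + X11 + X22 - 2 * X12 = 0 ∧
        X11 * X22 ≥ X12 ^ 2 ∧
        X11 ≥ p.1 ^ 2 ∧ X22 ≥ p.2 ^ 2}
      = {p : ℝ × ℝ | p.2 ≤ 0} := by
  ext p
  simp only [Set.mem_setOf_eq]
  constructor
  · rintro ⟨X11, X22, X12, h1, h2, h3, h4⟩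
    nlinarith [sq_nonneg (X11 - X22), sq_nonneg p.1, sq_nonneg p.2, sq_nonneg X12]
  · intro h
    refine ⟨p.1 ^ 2 + p.2 ^ 2 - p.2 / 4, p.1 ^ 2 + p.2 ^ 2 - p.2 / 4,
      p.1 ^ 2 + p.2 ^ 2 - p.2 / 4 + p.2 / 2, by ring, ?_, by nlinarith, by nlinarith⟩
    nlinarith [sq_nonneg p.1, sq_nonneg p.2]
end

section
/- For a symmetric n×n matrix M, if M is diagonally dominant with nonnegative diagonal entries (Mᵢᵢ ≥ Σ_{j≠i}|Mᵢⱼ| for all i), then for all X ∈ Sₙ and Y ∈ ℝ^{n×m} satisfying the standard-basis parabolic inequalities Xᵢᵢ + Xⱼⱼ ± 2Xᵢⱼ ≥ ‖(eᵢ±eⱼ)ᵀY‖₂², one has tr{M X} ≥ tr{Yᵀ M Y}. -/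
open Matrix

/-- If `M` is symmetric and diagonally dominant with nonnegative diagonal,
then for all `(Y, X)` satisfying the standard-basis parabolic inequalities,
`tr{M X} ≥ tr{Yᵀ M Y}`. -/
theorem stmt11 (n m : ℕ) (M : Matrix (Fin n) (Fin n) ℝ) (hMsymm : M.IsSymm)
    (hdiag : ∀ i, 0 ≤ M i i)
    (hDD : ∀ i, ∑ j ∈ Finset.univ \ {i}, |M i j| ≤ M i i) :
    ∀ (X : Matrix (Fin n) (Fin n) ℝ) (Y : Matrix (Fin n) (Fin m) ℝ), X.IsSymm →
      (∀ i j : Fin n,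
        (∑ k : Fin m, (Y i k + Y j k) ^ 2 ≤ X i i + X j j + 2 * X i j) ∧
        (∑ k : Fin m, (Y i k - Y j k) ^ 2 ≤ X i i + X j j - 2 * X i j)) →
      Matrix.trace (Yᵀ * M * Y) ≤ Matrix.trace (M * X) := by
  intro X Y hXsymm hpar
  set c : Fin n → Fin n → ℝ := fun i j => X i j - ∑ k, Y i k * Y j k with hc
  clear_value c
  -- parabolic inequalities in terms of c
  have hpm : ∀ i j, 0 ≤ c i i + c j j - 2 * c i j ∧ 0 ≤ c i i + c j j + 2 * c i j := by
    intro i j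
    obtain ⟨h1, h2⟩ := hpar i j
    have e1 : ∑ k, (Y i k + Y j k) ^ 2
        = (∑ k, Y i k * Y i k) + 2 * (∑ k, Y i k * Y j k) + ∑ k, Y j k * Y j k := by
      rw [Finset.mul_sum, ← Finset.sum_add_distrib, ← Finset.sum_add_distrib]
      exact Finset.sum_congr rfl fun k _ => by ring
    have e2 : ∑ k, (Y i k - Y j k) ^ 2
        = (∑ k, Y i k * Y i k) - 2 * (∑ k, Y i k * Y j k) + ∑ k, Y j k * Y j k := by
      rw [Finset.mul_sum, ← Finset.sum_sub_distrib, ← Finset.sum_add_distrib]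
      exact Finset.sum_congr rfl fun k _ => by ring
    simp only [hc]
    constructor <;> [nlinarith [h1, e1]; nlinarith [h2, e2]]
  have cdiag : ∀ i, 0 ≤ c i i := by
    intro i; have := (hpm i i).2; linarith
  have hlow : ∀ i j, -(|M i j| * c i i) / 2 + -(|M i j| * c j j) / 2 ≤ M i j * c i j := by
    intro i j
    obtain ⟨hm, hp⟩ := hpm i j
    rcases abs_cases (M i j) with ⟨he, h0⟩ | ⟨he, h0⟩ <;> rw [he]
    · nlinarith [mul_nonneg h0 hp]
    · nlinarith [mul_nonneg (neg_nonneg.mpr h0.le) hm]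
  -- trace computations
  have h1 : Matrix.trace (Yᵀ * M * Y) = ∑ i, ∑ j, M i j * (∑ k, Y i k * Y j k) := by
    simp only [Matrix.trace, Matrix.diag, Matrix.mul_apply, Matrix.transpose_apply,
      Finset.sum_mul, Finset.mul_sum]
    rw [Finset.sum_comm]
    conv_rhs => rw [Finset.sum_comm]
    refine Finset.sum_congr rfl fun i _ => ?_
    rw [Finset.sum_comm]
    exact Finset.sum_congr rfl fun j _ => Finset.sum_congr rfl fun k _ => by ring
  have h2 : Matrix.trace (M * X) = ∑ i, ∑ j, M i j * X i j := by
    simp only [Matrix.trace, Matrix.diag, Matrix.mul_apply]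
    exact Finset.sum_congr rfl fun i _ => Finset.sum_congr rfl fun j _ => by
      rw [hXsymm.apply j i]
  rw [h1, h2, ← sub_nonneg]
  have hgoal : (∑ i, ∑ j, M i j * X i j) - (∑ i, ∑ j, M i j * (∑ k, Y i k * Y j k))
      = ∑ i, ∑ j, M i j * c i j := by
    rw [← Finset.sum_sub_distrib]
    refine Finset.sum_congr rfl fun i _ => ?_
    rw [← Finset.sum_sub_distrib]
    exact Finset.sum_congr rfl fun j _ => by simp only [hc]; ring
  rw [hgoal]
  -- the index-swap identity
  have hswap : (∑ i, ∑ j ∈ Finset.univ \ {i}, |M i j| * c j j)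
      = ∑ i, ∑ j ∈ Finset.univ \ {i}, |M i j| * c i i := by
    have full : (∑ i, ∑ j, |M i j| * c j j) = ∑ i, ∑ j, |M i j| * c i i := by
      rw [Finset.sum_comm]
      exact Finset.sum_congr rfl fun i _ => Finset.sum_congr rfl fun j _ => by
        rw [hMsymm.apply i j]
    have d1 : ∀ i : Fin n, (∑ j ∈ Finset.univ \ {i}, |M i j| * c j j)
        = (∑ j, |M i j| * c j j) - |M i i| * c i i := by
      intro i
      rw [Finset.sum_eq_sum_sdiff_singleton_add (Finset.mem_univ i)
        (fun j => |M i j| * c j j)]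
      ring
    have d2 : ∀ i : Fin n, (∑ j ∈ Finset.univ \ {i}, |M i j| * c i i)
        = (∑ j, |M i j| * c i i) - |M i i| * c i i := by
      intro i
      rw [Finset.sum_eq_sum_sdiff_singleton_add (Finset.mem_univ i)
        (fun j => |M i j| * c i i)]
      ring
    simp only [d1, d2, Finset.sum_sub_distrib]
    rw [full]
  calc (0:ℝ) ≤ ∑ i, (M i i - ∑ j ∈ Finset.univ \ {i}, |M i j|) * c i i :=
        Finset.sum_nonneg fun i _ => mul_nonneg (by linarith [hDD i]) (cdiag i)
    _ = ∑ i, ((∑ j ∈ Finset.univ \ {i}, -(|M i j| * c i i) / 2)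
          + (∑ j ∈ Finset.univ \ {i}, -(|M i j| * c i i) / 2) + M i i * c i i) := by
        refine Finset.sum_congr rfl fun i _ => ?_
        rw [sub_mul, Finset.sum_mul]
        have : (∑ j ∈ Finset.univ \ {i}, -(|M i j| * c i i) / 2)
            = -(∑ j ∈ Finset.univ \ {i}, |M i j| * c i i) / 2 := by
          rw [← Finset.sum_neg_distrib, Finset.sum_div]
        rw [this]; ring
    _ = ∑ i, ((∑ j ∈ Finset.univ \ {i}, -(|M i j| * c i i) / 2)
          + (∑ j ∈ Finset.univ \ {i}, -(|M i j| * c j j) / 2) + M i i * c i i) := by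
        have e : (∑ i, ∑ j ∈ Finset.univ \ {i}, -(|M i j| * c j j) / 2)
            = ∑ i, ∑ j ∈ Finset.univ \ {i}, -(|M i j| * c i i) / 2 := by
          simp only [neg_div, Finset.sum_neg_distrib, ← Finset.sum_div]
          rw [hswap]
        simp only [Finset.sum_add_distrib]
        rw [e]
    _ = ∑ i, ((∑ j ∈ Finset.univ \ {i}, (-(|M i j| * c i i) / 2 + -(|M i j| * c j j) / 2))
          + M i i * c i i) := by
        refine Finset.sum_congr rfl fun i _ => ?_
        rw [Finset.sum_add_distrib]
    _ ≤ ∑ i, ((∑ j ∈ Finset.univ \ {i}, M i j * c i j) + M i i * c i i) :=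
        Finset.sum_le_sum fun i _ => add_le_add_left
          (Finset.sum_le_sum fun j _ => hlow i j) _
    _ = ∑ i, ∑ j, M i j * c i j := by
        refine Finset.sum_congr rfl fun i _ => ?_
        exact (Finset.sum_eq_sum_sdiff_singleton_add (Finset.mem_univ i)
          (fun j => M i j * c i j)).symm
end
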